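/- Let n be odd and let C = (C₀,…,C_{k−1}) be an equitable k-partition of the halved n-cube (the graph on even-weight binary words of length n with adjacency given by Hamming distance 2). Define C′_i = C_i ∪ (C_i + 1̄), where 1̄ is the all-ones word. Then (C′₀,…,C′_{k−1}) is an equitable k-partition of the n-cube H(n) (the graph on all binary words of length n with adjacency given by Hamming distance 1). Its quotient matrix is determined by the distance-(n−1)/2 distribution matrices of C in the halved n-cube. -/

import Mathlib

open Finset

/-- The hypercube graph on binary words indexed by `ι`. -/
def cube (ι : Type*) [Fintype ι] [DecidableEq ι] : SimpleGraph (ι → ZMod 2) where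
  Adj x y := hammingDist x y = 1
  symm := ⟨fun x y h => by simpa [hammingDist_comm] using h⟩
  loopless := ⟨fun x h => by simp [hammingDist_self] at h⟩

instance (ι : Type*) [Fintype ι] [DecidableEq ι] : DecidableRel (cube ι).Adj :=
  fun x y => inferInstanceAs (Decidable (hammingDist x y = 1))

/-- The halved hypercube: even-weight words, adjacent iff Hamming distance 2. -/
def halvedCube (ι : Type*) [Fintype ι] [DecidableEq ι] :
    SimpleGraph {x : ι → ZMod 2 // Even (hammingDist x 0)} where
  Adj x y := hammingDist x.1 y.1 = 2
  symm := ⟨fun x y h => by simpa [hammingDist_comm] using h⟩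
  loopless := ⟨fun x h => by simp [hammingDist_self] at h⟩

instance (ι : Type*) [Fintype ι] [DecidableEq ι] : DecidableRel (halvedCube ι).Adj :=
  fun x y => inferInstanceAs (Decidable (hammingDist x.1 y.1 = 2))

variable {V : Type*} [Fintype V] [DecidableEq V]

/-- Number of neighbors of `v` in the set `C`. -/
def nbrCount (G : SimpleGraph V) [DecidableRel G.Adj] (v : V) (C : Finset V) : ℕ :=
  (C.filter (G.Adj v)).card

/-- `(C0, C1)` is an equitable 2-partition with quotient matrix `[[a,b],[c,d]]`. -/
def IsEquitable2 (G : SimpleGraph V) [DecidableRel G.Adj] (C0 C1 : Finset V)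
    (a b c d : ℕ) : Prop :=
  Disjoint C0 C1 ∧ C0 ∪ C1 = Finset.univ ∧
  (∀ v ∈ C0, nbrCount G v C0 = a ∧ nbrCount G v C1 = b) ∧
  (∀ v ∈ C1, nbrCount G v C0 = c ∧ nbrCount G v C1 = d)

/-- `C` is an equitable `k`-partition with quotient matrix `S`. -/
def IsEquitableK (G : SimpleGraph V) [DecidableRel G.Adj] {k : ℕ}
    (C : V → Fin k) (S : Fin k → Fin k → ℕ) : Prop :=
  ∀ (v : V) (j : Fin k),
    (Finset.univ.filter (fun w => G.Adj v w ∧ C w = j)).card = S (C v) j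

namespace Stmt4Aux




/-! ### ZMod 2 and Hamming distance basics -/

lemma hd_filter {n : ℕ} (x y : Fin n → ZMod 2) :
    hammingDist x y = (univ.filter (fun p => x p ≠ y p)).card := rfl

lemma cast_hd {n : ℕ} (x y : Fin n → ZMod 2) :
    ((hammingDist x y : ℕ) : ZMod 2) = ∑ p, (x p + y p) := by
  rw [hd_filter, Finset.card_filter, Nat.cast_sum]
  refine Finset.sum_congr rfl fun p _ => ?_
  exact (by decide : ∀ a b : ZMod 2, ((if a ≠ b then 1 else 0 : ℕ) : ZMod 2) = a + b) _ _

lemma even_iff_cast {m : ℕ} : Even m ↔ ((m : ZMod 2) = 0) := by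
  rw [ZMod.natCast_eq_zero_iff]
  exact even_iff_two_dvd

lemma cast_hd_add {n : ℕ} (x y z : Fin n → ZMod 2) :
    ((hammingDist x z : ℕ) : ZMod 2) = (hammingDist x y : ℕ) + (hammingDist y z : ℕ) := by
  rw [cast_hd, cast_hd, cast_hd, ← Finset.sum_add_distrib]
  exact Finset.sum_congr rfl fun p _ =>
    (by decide : ∀ a b c : ZMod 2, a + c = (a + b) + (b + c)) _ _ _

lemma even_hd_iff {n : ℕ} {x y : Fin n → ZMod 2} (hx : Even (hammingDist x 0))
    (hy : Even (hammingDist y 0)) : Even (hammingDist x y) := by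
  rw [even_iff_cast] at hx hy ⊢
  rw [cast_hd_add x 0 y, hx, hammingDist_comm 0 y, hy]
  simp

lemma even_of_even_dist {n : ℕ} {x y : Fin n → ZMod 2} (hx : Even (hammingDist x 0))
    (hxy : Even (hammingDist x y)) : Even (hammingDist y 0) := by
  rw [even_iff_cast] at hx hxy ⊢
  rw [cast_hd_add y x 0, hammingDist_comm y x, hxy, hx]
  simp

lemma hd_add_one {n : ℕ} (x y : Fin n → ZMod 2) :
    hammingDist x (y + 1) = n - hammingDist x y := by
  rw [hd_filter, hd_filter]
  have h : (univ.filter fun p => x p ≠ (y + 1) p) = univ.filter (fun p => ¬ (x p ≠ y p)) := by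
    apply Finset.filter_congr
    intro p _
    simp only [Pi.add_apply, Pi.one_apply]
    exact (by decide : ∀ a b : ZMod 2, (a ≠ b + 1) ↔ ¬ (a ≠ b)) _ _
  rw [h, Finset.filter_not, Finset.card_sdiff_of_subset (Finset.filter_subset _ _)]
  simp

lemma add_one_one {n : ℕ} (w : Fin n → ZMod 2) : w + 1 + 1 = w := by
  rw [add_assoc]
  have : (1 : Fin n → ZMod 2) + 1 = 0 := by funext p; show (1:ZMod 2)+1 = 0; decide
  rw [this, add_zero]

lemma nbr_odd {n : ℕ} {v w : Fin n → ZMod 2} (hv : Even (hammingDist v 0))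
    (h1 : hammingDist v w = 1) : ¬ Even (hammingDist w 0) := by
  intro hev
  have := even_hd_iff hv hev
  rw [h1] at this
  exact Nat.not_even_one this

lemma even_add_one {n : ℕ} (hn : Odd n) {x : Fin n → ZMod 2}
    (hx : ¬ Even (hammingDist x 0)) : Even (hammingDist (x + 1) 0) := by
  rw [hammingDist_comm, hd_add_one, hammingDist_comm 0 x]
  exact Nat.Odd.sub_odd hn (Nat.not_even_iff_odd.mp hx)






lemma count_inter {n : ℕ} (D : Finset (Fin n)) (r t : ℕ) (ht : t ≤ r) :
    ((univ.powersetCard r).filter (fun s => (s ∩ D).card = t)).card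
      = D.card.choose t * (n - D.card).choose (r - t) := by
  have hc : Dᶜ.card = n - D.card := by rw [Finset.card_compl, Fintype.card_fin]
  rw [← hc, ← Finset.card_powersetCard, ← Finset.card_powersetCard, ← Finset.card_product]
  refine Finset.card_bij' (fun s _ => (s ∩ D, s \ D)) (fun p _ => p.1 ∪ p.2) ?_ ?_ ?_ ?_
  · intro s hs
    rw [Finset.mem_filter, Finset.mem_powersetCard] at hs
    obtain ⟨⟨-, hcard⟩, hint⟩ := hs
    rw [Finset.mem_product]
    constructor
    · rw [Finset.mem_powersetCard]
      exact ⟨Finset.inter_subset_right, hint⟩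
    · rw [Finset.mem_powersetCard]
      refine ⟨fun p hp => ?_, ?_⟩
      · rw [Finset.mem_sdiff] at hp
        exact Finset.mem_compl.mpr hp.2
      · show (s \ D).card = r - t
        have := Finset.card_sdiff_add_card_inter s D
        omega
  · rintro ⟨a, b⟩ hab
    rw [Finset.mem_product, Finset.mem_powersetCard, Finset.mem_powersetCard] at hab
    obtain ⟨⟨haD, hat⟩, hbD, hbt⟩ := hab
    have hdisj : Disjoint a b := by
      rw [Finset.disjoint_left]
      intro p hpa hpb
      exact Finset.mem_compl.mp (hbD hpb) (haD hpa)
    rw [Finset.mem_filter, Finset.mem_powersetCard]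
    have hiD : (a ∪ b) ∩ D = a := by
      ext p
      simp only [Finset.mem_inter, Finset.mem_union]
      constructor
      · rintro ⟨hp1 | hp2, hpD⟩
        · exact hp1
        · exact absurd hpD (Finset.mem_compl.mp (hbD hp2))
      · intro hpa; exact ⟨Or.inl hpa, haD hpa⟩
    refine ⟨⟨Finset.subset_univ _, ?_⟩, by rw [hiD, hat]⟩
    rw [Finset.card_union_of_disjoint hdisj, hat, hbt]
    omega
  · intro s hs
    simp only []
    ext p
    simp only [Finset.mem_union, Finset.mem_inter, Finset.mem_sdiff]
    tauto
  · rintro ⟨a, b⟩ hab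
    rw [Finset.mem_product, Finset.mem_powersetCard, Finset.mem_powersetCard] at hab
    obtain ⟨⟨haD, hat⟩, hbD, hbt⟩ := hab
    have hiD : (a ∪ b) ∩ D = a := by
      ext p
      simp only [Finset.mem_inter, Finset.mem_union]
      constructor
      · rintro ⟨hp1 | hp2, hpD⟩
        · exact hp1
        · exact absurd hpD (Finset.mem_compl.mp (hbD hp2))
      · intro hpa; exact ⟨Or.inl hpa, haD hpa⟩
    have hsD : (a ∪ b) \ D = b := by
      ext p
      simp only [Finset.mem_sdiff, Finset.mem_union]
      constructor
      · rintro ⟨hp1 | hp2, hpD⟩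
        · exact absurd (haD hp1) hpD
        · exact hp2
      · intro hpb; exact ⟨Or.inr hpb, Finset.mem_compl.mp (hbD hpb)⟩
    simp only [hiD, hsD]

def ncoefTerm (n h d t : ℕ) : ℕ :=
  if t ≤ h ∧ (2 - t) + (h - t) = d then h.choose t * (n - h).choose (2 - t) else 0

def Ncoef (n h d : ℕ) : ℕ := ∑ t ∈ Finset.range 3, ncoefTerm n h d t

lemma fiber_card {n : ℕ} (D : Finset (Fin n)) (d t : ℕ) (ht : t ≤ 2) :
    ((univ.powersetCard 2).filter
        (fun s => ((s \ D).card + (D \ s).card = d ∧ (s ∩ D).card = t))).card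
      = ncoefTerm n D.card d t := by
  by_cases hcond : t ≤ D.card ∧ (2 - t) + (D.card - t) = d
  · rw [ncoefTerm, if_pos hcond, ← count_inter D 2 t ht]
    congr 1
    apply Finset.filter_congr
    intro s hs
    rw [Finset.mem_powersetCard] at hs
    constructor
    · exact fun h => h.2
    · intro h
      have h1 := Finset.card_sdiff_add_card_inter s D
      have h2 := Finset.card_sdiff_add_card_inter D s
      have h3 : (D ∩ s).card = t := by rw [Finset.inter_comm]; exact h
      exact ⟨by omega, h⟩
  · rw [ncoefTerm, if_neg hcond, Finset.card_eq_zero, Finset.filter_eq_empty_iff]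
    intro s hs
    rw [Finset.mem_powersetCard] at hs
    rintro ⟨hd', hts⟩
    apply hcond
    have h1 := Finset.card_sdiff_add_card_inter s D
    have h2 := Finset.card_sdiff_add_card_inter D s
    have h3 : (D ∩ s).card = t := by rw [Finset.inter_comm]; exact hts
    have h4 : t ≤ D.card := by
      rw [← hts]; exact Finset.card_le_card Finset.inter_subset_right
    constructor
    · exact h4
    · omega

lemma Ncoef_pos (n d : ℕ) : 0 < Ncoef n (d + 2) d := by
  have h2 : ncoefTerm n (d + 2) d 2 = (d + 2).choose 2 * (n - (d + 2)).choose 0 :=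
    if_pos ⟨by omega, by omega⟩
  have hpos : 0 < ncoefTerm n (d + 2) d 2 := by
    rw [h2, Nat.choose_zero_right, mul_one]
    exact Nat.choose_pos (by omega)
  calc 0 < ncoefTerm n (d + 2) d 2 := hpos
    _ ≤ Ncoef n (d + 2) d := by
        rw [Ncoef, Finset.sum_range_succ]
        exact Nat.le_add_left _ _

lemma Ncoef_support {n h d : ℕ} (hne : Ncoef n h d ≠ 0) : h ≤ d + 2 := by
  by_contra hlt
  push_neg at hlt
  apply hne
  rw [Ncoef]
  apply Finset.sum_eq_zero
  intro t ht
  rw [Finset.mem_range] at ht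
  rw [ncoefTerm, if_neg]
  rintro ⟨h1, h2⟩
  omega


def chi {n : ℕ} (s : Finset (Fin n)) : Fin n → ZMod 2 := fun p => if p ∈ s then 1 else 0

section
variable {n : ℕ}



lemma sup_chi (x : Fin n → ZMod 2) (s : Finset (Fin n)) :
    (univ.filter fun p => x p ≠ (x + chi s) p) = s := by
  ext p
  rw [Finset.mem_filter]
  simp only [Finset.mem_filter, Finset.mem_univ, true_and, Pi.add_apply, chi]
  by_cases hp : p ∈ s
  · simp only [hp, if_true, iff_true]
    exact (by decide : ∀ a : ZMod 2, a ≠ a + 1) _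
  · simp only [hp, if_false, iff_false, add_zero]
    exact fun h => h rfl

lemma key_sdiff (x z : Fin n → ZMod 2) (y : Fin n → ZMod 2) :
    (univ.filter fun p => y p ≠ z p)
      = ((univ.filter fun p => x p ≠ y p) \ (univ.filter fun p => x p ≠ z p))
        ∪ ((univ.filter fun p => x p ≠ z p) \ (univ.filter fun p => x p ≠ y p)) := by
  ext p
  simp only [Finset.mem_union, Finset.mem_sdiff, Finset.mem_filter, Finset.mem_univ, true_and]
  exact (by decide : ∀ a b c : ZMod 2,
    (b ≠ c ↔ ((a ≠ b) ∧ ¬ (a ≠ c)) ∨ ((a ≠ c) ∧ ¬ (a ≠ b)))) (x p) (y p) (z p)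

lemma hd_eq_sdiff (x z y : Fin n → ZMod 2) :
    hammingDist y z
      = (((univ.filter fun p => x p ≠ y p) \ (univ.filter fun p => x p ≠ z p))).card
        + (((univ.filter fun p => x p ≠ z p) \ (univ.filter fun p => x p ≠ y p))).card := by
  rw [show hammingDist y z = (univ.filter fun p => y p ≠ z p).card from rfl, key_sdiff x z y]
  exact Finset.card_union_of_disjoint disjoint_sdiff_sdiff

lemma step1 (x z : Fin n → ZMod 2) (d : ℕ) :
    (univ.filter (fun y => hammingDist x y = 2 ∧ hammingDist y z = d)).card
      = ((univ.powersetCard 2).filter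
          (fun s => (s \ (univ.filter fun p => x p ≠ z p)).card
            + ((univ.filter fun p => x p ≠ z p) \ s).card = d)).card := by
  set D := univ.filter (fun p => x p ≠ z p) with hD
  refine Finset.card_bij' (fun y _ => univ.filter (fun p => x p ≠ y p))
    (fun s _ => x + chi s) ?_ ?_ ?_ ?_
  · intro y hy
    rw [Finset.mem_filter] at hy
    obtain ⟨-, h2, hd'⟩ := hy
    rw [Finset.mem_filter, Finset.mem_powersetCard]
    refine ⟨⟨Finset.subset_univ _, h2⟩, ?_⟩
    rw [← hd_eq_sdiff x z y, hd']
  · intro s hs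
    rw [Finset.mem_filter, Finset.mem_powersetCard] at hs
    obtain ⟨⟨-, h2⟩, hd'⟩ := hs
    rw [Finset.mem_filter]
    refine ⟨Finset.mem_univ _, ?_, ?_⟩
    · rw [show hammingDist x (x + chi s) = (univ.filter fun p => x p ≠ (x + chi s) p).card from rfl,
        sup_chi, h2]
    · rw [hd_eq_sdiff x z (x + chi s), sup_chi, hd']
  · intro y hy
    funext p
    simp only [Pi.add_apply, chi, Finset.mem_filter, Finset.mem_univ, true_and]
    exact (by decide : ∀ a b : ZMod 2, a + (if a ≠ b then 1 else 0) = b) _ _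
  · intro s hs
    exact sup_chi x s


lemma lemA (x z : Fin n → ZMod 2) (d : ℕ) :
    (univ.filter (fun y => hammingDist x y = 2 ∧ hammingDist y z = d)).card
      = Ncoef n (hammingDist x z) d := by
  rw [step1 x z d]
  have hDcard : hammingDist x z = (univ.filter fun p => x p ≠ z p).card := rfl
  rw [hDcard, Ncoef]
  rw [Finset.card_eq_sum_card_fiberwise
    (f := fun s => (s ∩ (univ.filter fun p => x p ≠ z p)).card) (t := Finset.range 3) ?_]
  · apply Finset.sum_congr rfl
    intro t ht
    rw [Finset.mem_range] at ht
    rw [← fiber_card (univ.filter fun p => x p ≠ z p) d t (by omega), Finset.filter_filter]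
  · intro s hs
    rw [Finset.mem_coe, Finset.mem_filter, Finset.mem_powersetCard] at hs
    rw [Finset.mem_coe, Finset.mem_range]
    show (s ∩ (univ.filter fun p => x p ≠ z p)).card < 3
    obtain ⟨⟨-, h2⟩, -⟩ := hs
    have : (s ∩ (univ.filter fun p => x p ≠ z p)).card ≤ s.card :=
      Finset.card_le_card Finset.inter_subset_left
    omega

lemma lemA_ev (x z : {x : Fin n → ZMod 2 // Even (hammingDist x 0)}) (d : ℕ) :
    (univ.filter (fun y : {x : Fin n → ZMod 2 // Even (hammingDist x 0)} =>
        hammingDist x.1 y.1 = 2 ∧ hammingDist y.1 z.1 = d)).card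
      = Ncoef n (hammingDist x.1 z.1) d := by
  rw [← lemA x.1 z.1 d]
  have himp : ∀ y : Fin n → ZMod 2,
      hammingDist x.1 y = 2 ∧ hammingDist y z.1 = d → Even (hammingDist y 0) := by
    intro y hy
    exact even_of_even_dist x.2 (by rw [hy.1]; exact even_two)
  refine Finset.card_bij' (fun y _ => y.1)
    (fun y hy => ⟨y, himp y (Finset.mem_filter.mp hy).2⟩) ?_ ?_ ?_ ?_
  · intro y hy
    rw [Finset.mem_filter] at hy ⊢
    exact ⟨Finset.mem_univ _, hy.2⟩
  · intro y hy
    rw [Finset.mem_filter] at hy ⊢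
    exact ⟨Finset.mem_univ _, hy.2⟩
  · intro y _
    rfl
  · intro y _
    rfl

def Fc {k : ℕ} (C : {x : Fin n → ZMod 2 // Even (hammingDist x 0)} → Fin k) (h : ℕ)
    (x : {x : Fin n → ZMod 2 // Even (hammingDist x 0)}) (j : Fin k) : ℕ :=
  (univ.filter (fun z => hammingDist x.1 z.1 = h ∧ C z = j)).card

lemma recur {k : ℕ} (C : {x : Fin n → ZMod 2 // Even (hammingDist x 0)} → Fin k) (d : ℕ)
    (x : {x : Fin n → ZMod 2 // Even (hammingDist x 0)}) (j : Fin k) :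
    ∑ y ∈ univ.filter (fun y : {x : Fin n → ZMod 2 // Even (hammingDist x 0)} =>
        hammingDist x.1 y.1 = 2), Fc C d y j
      = ∑ h' ∈ Finset.range (n + 1), Ncoef n h' d * Fc C h' x j := by
  have e1 : ∀ y : {x : Fin n → ZMod 2 // Even (hammingDist x 0)}, Fc C d y j
      = ∑ z ∈ univ.filter (fun z : {x : Fin n → ZMod 2 // Even (hammingDist x 0)} => C z = j),
          (if hammingDist y.1 z.1 = d then 1 else 0) := by
    intro y
    rw [Fc, Finset.card_filter, Finset.sum_filter]
    apply Finset.sum_congr rfl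
    intro z _
    by_cases h1 : C z = j <;> by_cases h2 : hammingDist y.1 z.1 = d <;> simp [h1, h2]
  calc ∑ y ∈ univ.filter (fun y : {x : Fin n → ZMod 2 // Even (hammingDist x 0)} =>
        hammingDist x.1 y.1 = 2), Fc C d y j
      = ∑ y ∈ univ.filter (fun y : {x : Fin n → ZMod 2 // Even (hammingDist x 0)} =>
          hammingDist x.1 y.1 = 2), ∑ z ∈ univ.filter
            (fun z : {x : Fin n → ZMod 2 // Even (hammingDist x 0)} => C z = j),
          (if hammingDist y.1 z.1 = d then 1 else 0) :=
        Finset.sum_congr rfl (fun y _ => e1 y)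
    _ = ∑ z ∈ univ.filter (fun z : {x : Fin n → ZMod 2 // Even (hammingDist x 0)} => C z = j),
          ∑ y ∈ univ.filter (fun y : {x : Fin n → ZMod 2 // Even (hammingDist x 0)} =>
            hammingDist x.1 y.1 = 2), (if hammingDist y.1 z.1 = d then 1 else 0) :=
        Finset.sum_comm
    _ = ∑ z ∈ univ.filter (fun z : {x : Fin n → ZMod 2 // Even (hammingDist x 0)} => C z = j),
          Ncoef n (hammingDist x.1 z.1) d := by
        apply Finset.sum_congr rfl
        intro z _
        rw [← Finset.card_filter, Finset.filter_filter]
        exact lemA_ev x z d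
    _ = ∑ h' ∈ Finset.range (n + 1), Ncoef n h' d * Fc C h' x j := by
        rw [← Finset.sum_fiberwise_of_maps_to (g := fun z => hammingDist x.1 z.1)
          (t := Finset.range (n + 1)) ?_]
        · apply Finset.sum_congr rfl
          intro h' _
          have hc : ∀ z ∈ (univ.filter
              (fun z : {x : Fin n → ZMod 2 // Even (hammingDist x 0)} => C z = j)).filter
              (fun z => hammingDist x.1 z.1 = h'),
              Ncoef n (hammingDist x.1 z.1) d = Ncoef n h' d := by
            intro z hz
            rw [(Finset.mem_filter.mp hz).2]
          rw [Finset.sum_congr rfl hc, Finset.sum_const, smul_eq_mul, mul_comm]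
          congr 1
          rw [Fc, Finset.filter_filter]
          congr 1
          ext z
          simp only [Finset.mem_filter, Finset.mem_univ, true_and]
          constructor
          · rintro ⟨h1, h2⟩; exact ⟨h2, h1⟩
          · rintro ⟨h1, h2⟩; exact ⟨h2, h1⟩
        · intro z _
          rw [Finset.mem_range]
          show hammingDist x.1 z.1 < n + 1
          have : hammingDist x.1 z.1 ≤ Fintype.card (Fin n) := hammingDist_le_card_fintype
          rw [Fintype.card_fin] at this
          omega


variable {k : ℕ}

lemma cell_invariant {C : {x : Fin n → ZMod 2 // Even (hammingDist x 0)} → Fin k}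
    {S : Fin k → Fin k → ℕ} (hC : IsEquitableK (halvedCube (Fin n)) C S)
    (hCsurj : Function.Surjective C) :
    ∀ (h : ℕ) (x x' : {x : Fin n → ZMod 2 // Even (hammingDist x 0)}), C x = C x' →
      ∀ j, Fc C h x j = Fc C h x' j := by
  intro h
  induction h using Nat.strong_induction_on with
  | _ h IH =>
    rcases h with - | - | d
    · -- h = 0
      intro x x' hxx' j
      have e : ∀ y : {x : Fin n → ZMod 2 // Even (hammingDist x 0)},
          Fc C 0 y j = if C y = j then 1 else 0 := by
        intro y
        rw [Fc]
        have hset : (univ.filter fun z : {x : Fin n → ZMod 2 // Even (hammingDist x 0)} =>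
            hammingDist y.1 z.1 = 0 ∧ C z = j) = if C y = j then {y} else ∅ := by
          split_ifs with hcj
          · ext z
            simp only [Finset.mem_filter, Finset.mem_univ, true_and, Finset.mem_singleton,
              hammingDist_eq_zero]
            constructor
            · rintro ⟨h1, -⟩
              exact (Subtype.ext h1).symm
            · rintro rfl
              exact ⟨rfl, hcj⟩
          · ext z
            simp only [Finset.mem_filter, Finset.mem_univ, true_and, Finset.notMem_empty,
              iff_false, hammingDist_eq_zero]
            rintro ⟨h1, h2⟩
            exact hcj (by rw [← Subtype.ext h1] at h2; exact h2)
        rw [hset]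
        split_ifs
        · exact Finset.card_singleton _
        · exact Finset.card_empty
      rw [e x, e x', hxx']
    · -- h = 1
      intro x x' _ j
      have e : ∀ y : {x : Fin n → ZMod 2 // Even (hammingDist x 0)}, Fc C 1 y j = 0 := by
        intro y
        rw [Fc, Finset.card_eq_zero, Finset.filter_eq_empty_iff]
        intro z _
        rintro ⟨h1, -⟩
        have := even_hd_iff y.2 z.2
        rw [h1] at this
        exact Nat.not_even_one this
      rw [e x, e x']
    · -- h = d + 2
      intro x x' hxx' j
      by_cases hn2 : d + 2 ≤ n
      · have hGy : ∀ y : {x : Fin n → ZMod 2 // Even (hammingDist x 0)},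
            Fc C d y j = Fc C d (Function.surjInv hCsurj (C y)) j :=
          fun y => IH d (by omega) y _ (Function.surjInv_eq hCsurj (C y)).symm j
        have key : ∀ w : {x : Fin n → ZMod 2 // Even (hammingDist x 0)},
            (∑ y ∈ univ.filter (fun y : {x : Fin n → ZMod 2 // Even (hammingDist x 0)} =>
              hammingDist w.1 y.1 = 2), Fc C d y j)
            = ∑ i : Fin k, S (C w) i * Fc C d (Function.surjInv hCsurj i) j := by
          intro w
          rw [← Finset.sum_fiberwise_of_maps_to (g := C) (t := (univ : Finset (Fin k)))
            (fun z _ => Finset.mem_univ _)]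
          apply Finset.sum_congr rfl
          intro i _
          have hcong : ∀ y ∈ (univ.filter
              (fun y : {x : Fin n → ZMod 2 // Even (hammingDist x 0)} =>
                hammingDist w.1 y.1 = 2)).filter (fun y => C y = i),
              Fc C d y j = Fc C d (Function.surjInv hCsurj i) j := by
            intro y hy
            rw [hGy y, (Finset.mem_filter.mp hy).2]
          rw [Finset.sum_congr rfl hcong, Finset.sum_const, smul_eq_mul, ← hC w i]
          have hfe : ((univ.filter (fun y : {x : Fin n → ZMod 2 // Even (hammingDist x 0)} =>
                hammingDist w.1 y.1 = 2)).filter fun y => C y = i)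
              = univ.filter (fun w1 => (halvedCube (Fin n)).Adj w w1 ∧ C w1 = i) := by
            rw [Finset.filter_filter]
            apply Finset.filter_congr
            intro z _
            exact Iff.rfl
          rw [hfe]
        have hsum : ∑ h' ∈ Finset.range (n + 1), Ncoef n h' d * Fc C h' x j
            = ∑ h' ∈ Finset.range (n + 1), Ncoef n h' d * Fc C h' x' j := by
          rw [← recur C d x j, ← recur C d x' j, key x, key x', hxx']
        have hmem : d + 2 ∈ Finset.range (n + 1) := Finset.mem_range.mpr (by omega)
        rw [← Finset.sum_erase_add _ _ hmem, ← Finset.sum_erase_add _ _ hmem] at hsum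
        have herase : ∑ h' ∈ (Finset.range (n + 1)).erase (d + 2), Ncoef n h' d * Fc C h' x j
            = ∑ h' ∈ (Finset.range (n + 1)).erase (d + 2), Ncoef n h' d * Fc C h' x' j := by
          apply Finset.sum_congr rfl
          intro h' hh'
          have hne : h' ≠ d + 2 := Finset.ne_of_mem_erase hh'
          by_cases hz : Ncoef n h' d = 0
          · rw [hz, zero_mul, zero_mul]
          · have := Ncoef_support hz
            rw [IH h' (by omega) x x' hxx' j]
        rw [herase] at hsum
        have hcanc := Nat.add_left_cancel hsum
        exact Nat.eq_of_mul_eq_mul_left (Ncoef_pos n d) hcanc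
      · have e : ∀ y : {x : Fin n → ZMod 2 // Even (hammingDist x 0)}, Fc C (d + 2) y j = 0 := by
          intro y
          rw [Fc, Finset.card_eq_zero, Finset.filter_eq_empty_iff]
          intro z _
          rintro ⟨h1, -⟩
          have : hammingDist y.1 z.1 ≤ Fintype.card (Fin n) := hammingDist_le_card_fintype
          rw [Fintype.card_fin] at this
          omega
        rw [e x, e x']

lemma even_nbr_of_odd {v w : Fin n → ZMod 2} (hv : ¬ Even (hammingDist v 0))
    (h1 : hammingDist v w = 1) : Even (hammingDist w 0) := by
  have hv' : ((hammingDist v 0 : ℕ) : ZMod 2) = 1 := by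
    rw [even_iff_cast] at hv
    revert hv
    generalize ((hammingDist v 0 : ℕ) : ZMod 2) = a
    revert a
    decide
  rw [even_iff_cast, cast_hd_add w v 0, hammingDist_comm w v, h1, hv']
  decide

end
end Stmt4Aux

/-- for odd `n`, extending an equitable `k`-partition `C` of the
halved `n`-cube by `C'ᵢ = Cᵢ ∪ (Cᵢ + 1̄)` (i.e. `C'` agrees with `C` on
even-weight words and is invariant under complementation) yields an equitable
`k`-partition of the `n`-cube. -/
theorem stmt4 (n k : ℕ) (hn : Odd n)
    (C : {x : Fin n → ZMod 2 // Even (hammingDist x 0)} → Fin k)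
    (S : Fin k → Fin k → ℕ)
    (hC : IsEquitableK (halvedCube (Fin n)) C S)
    (hCsurj : Function.Surjective C)
    (C' : (Fin n → ZMod 2) → Fin k)
    (hagree : ∀ (x : Fin n → ZMod 2) (h : Even (hammingDist x 0)), C' x = C ⟨x, h⟩)
    (hinv : ∀ x : Fin n → ZMod 2, C' (x + 1) = C' x) :
    ∃ S' : Fin k → Fin k → ℕ,
      IsEquitableK (cube (Fin n)) C' S' ∧ Function.Surjective C' := by
  classical
  have hn1 : 1 ≤ n := by rcases hn with ⟨m, rfl⟩; omega
  refine ⟨fun i j => Stmt4Aux.Fc C (n - 1) (Function.surjInv hCsurj i) j, ?_, ?_⟩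
  · intro v j
    by_cases hv : Even (hammingDist v 0)
    · have hb : (Finset.univ.filter fun w => (cube (Fin n)).Adj v w ∧ C' w = j).card
          = Stmt4Aux.Fc C (n - 1) ⟨v, hv⟩ j := by
        rw [Stmt4Aux.Fc]
        refine Finset.card_bij'
          (fun w hw => ⟨w + 1, Stmt4Aux.even_add_one hn
            (Stmt4Aux.nbr_odd hv ((Finset.mem_filter.mp hw).2.1))⟩)
          (fun z _ => z.1 + 1) ?_ ?_ ?_ ?_
        · intro w hw
          obtain ⟨-, h1, h2⟩ := Finset.mem_filter.mp hw
          rw [Finset.mem_filter]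
          refine ⟨Finset.mem_univ _, ?_, ?_⟩
          · show hammingDist v (w + 1) = n - 1
            rw [Stmt4Aux.hd_add_one]
            have h1' : hammingDist v w = 1 := h1
            rw [h1']
          · show C ⟨w + 1, _⟩ = j
            rw [← hagree (w + 1) _, hinv w]
            exact h2
        · intro z hz
          obtain ⟨-, h1, h2⟩ := Finset.mem_filter.mp hz
          rw [Finset.mem_filter]
          have hle : hammingDist v z.1 ≤ n := by
            have := hammingDist_le_card_fintype (x := v) (y := z.1)
            rwa [Fintype.card_fin] at this
          refine ⟨Finset.mem_univ _, ?_, ?_⟩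
          · show hammingDist v (z.1 + 1) = 1
            rw [Stmt4Aux.hd_add_one]
            have h1' : hammingDist v z.1 = n - 1 := h1
            omega
          · show C' (z.1 + 1) = j
            rw [hinv z.1, hagree z.1 z.2, Subtype.coe_eta]
            exact h2
        · intro w hw
          exact Stmt4Aux.add_one_one w
        · intro z hz
          exact Subtype.ext (Stmt4Aux.add_one_one z.1)
      rw [hb]
      rw [Stmt4Aux.cell_invariant hC hCsurj (n - 1) ⟨v, hv⟩
        (Function.surjInv hCsurj (C ⟨v, hv⟩)) (Function.surjInv_eq hCsurj _).symm j]
      rw [hagree v hv]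
    · have hv1 : Even (hammingDist (v + 1) 0) := Stmt4Aux.even_add_one hn hv
      have hb : (Finset.univ.filter fun w => (cube (Fin n)).Adj v w ∧ C' w = j).card
          = Stmt4Aux.Fc C (n - 1) ⟨v + 1, hv1⟩ j := by
        rw [Stmt4Aux.Fc]
        refine Finset.card_bij'
          (fun w hw => ⟨w, Stmt4Aux.even_nbr_of_odd hv ((Finset.mem_filter.mp hw).2.1)⟩)
          (fun z _ => z.1) ?_ ?_ ?_ ?_
        · intro w hw
          obtain ⟨-, h1, h2⟩ := Finset.mem_filter.mp hw
          rw [Finset.mem_filter]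
          refine ⟨Finset.mem_univ _, ?_, ?_⟩
          · show hammingDist (v + 1) w = n - 1
            rw [hammingDist_comm, Stmt4Aux.hd_add_one]
            have h1' : hammingDist v w = 1 := h1
            rw [hammingDist_comm w v, h1']
          · show C ⟨w, _⟩ = j
            rw [← hagree w _]
            exact h2
        · intro z hz
          obtain ⟨-, h1, h2⟩ := Finset.mem_filter.mp hz
          rw [Finset.mem_filter]
          have hle : hammingDist v z.1 ≤ n := by
            have := hammingDist_le_card_fintype (x := v) (y := z.1)
            rwa [Fintype.card_fin] at this
          refine ⟨Finset.mem_univ _, ?_, ?_⟩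
          · show hammingDist v z.1 = 1
            have h1' : hammingDist (v + 1) z.1 = n - 1 := h1
            rw [hammingDist_comm, Stmt4Aux.hd_add_one, hammingDist_comm z.1 v] at h1'
            omega
          · show C' z.1 = j
            rw [hagree z.1 z.2, Subtype.coe_eta]
            exact h2
        · intro w hw
          rfl
        · intro z hz
          exact Subtype.ext rfl
      rw [hb]
      rw [Stmt4Aux.cell_invariant hC hCsurj (n - 1) ⟨v + 1, hv1⟩
        (Function.surjInv hCsurj (C ⟨v + 1, hv1⟩)) (Function.surjInv_eq hCsurj _).symm j]
      have hcv : C' v = C ⟨v + 1, hv1⟩ := by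
        rw [← hinv v, hagree (v + 1) hv1]
      rw [hcv]
  · intro i
    obtain ⟨z, hz⟩ := hCsurj i
    exact ⟨z.1, by rw [hagree z.1 z.2, Subtype.coe_eta, hz]⟩
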